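/- arXiv:2205.00459 — 14 statements merged into one kernel-verified Lean document; each statement's English description precedes it below -/
import Mathlib

section
/- For every N ≥ 1, the scaled weighted firing rate of the LIF neuron satisfies â[N] = ((1−λ)/Δt)·Î[N] − ((1−λ)/(Δt·(1−λ^N)))·V[N]. -/
/-- For a discrete-time LIF neuron with threshold `Vth > 0`, leak
factor `lam ∈ (0,1)` and discretization step `dt > 0`, for every `N ≥ 1` the scaled
weighted firing rate `â N` satisfies
`â N = ((1 − lam)/dt) · Î N − ((1 − lam)/(dt·(1 − lam^N))) · V N`,
where `Î N` is the weighted average input current. -/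
theorem lif_weighted_rate_eq (Vth lam dt : ℝ) (hVth : 0 < Vth)
    (hlam0 : 0 < lam) (hlam1 : lam < 1) (hdt : 0 < dt)
    (I V s : ℕ → ℝ)
    (hV0 : V 0 = 0)
    (hs : ∀ n : ℕ, s (n + 1) = if Vth ≤ lam * V n + (1 - lam) * I (n + 1) then 1 else 0)
    (hV : ∀ n : ℕ, V (n + 1) = (lam * V n + (1 - lam) * I (n + 1)) - Vth * s (n + 1)) :
    ∀ N : ℕ, 1 ≤ N →
      Vth * (∑ n ∈ Finset.Icc 1 N, lam ^ (N - n) * s n)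
          / (dt * ∑ n ∈ Finset.Icc 1 N, lam ^ (N - n))
        = ((1 - lam) / dt)
              * ((∑ n ∈ Finset.Icc 1 N, lam ^ (N - n) * I n)
                  / (∑ n ∈ Finset.Icc 1 N, lam ^ (N - n)))
            - ((1 - lam) / (dt * (1 - lam ^ N))) * V N := by
  -- shift lemma for sums
  have shift : ∀ (f : ℕ → ℝ) (N : ℕ),
      (∑ n ∈ Finset.Icc 1 N, lam ^ (N + 1 - n) * f n)
        = lam * ∑ n ∈ Finset.Icc 1 N, lam ^ (N - n) * f n := by
    intro f N
    rw [Finset.mul_sum]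
    apply Finset.sum_congr rfl
    intro n hn
    simp only [Finset.mem_Icc] at hn
    have : N + 1 - n = (N - n) + 1 := by omega
    rw [this, pow_succ]; ring
  -- key identity
  have key : ∀ N : ℕ,
      Vth * (∑ n ∈ Finset.Icc 1 N, lam ^ (N - n) * s n)
        = (1 - lam) * (∑ n ∈ Finset.Icc 1 N, lam ^ (N - n) * I n) - V N := by
    intro N
    induction N with
    | zero => simp [hV0]
    | succ N ih =>
        rw [Finset.sum_Icc_succ_top (by omega), Finset.sum_Icc_succ_top (by omega),
          shift, shift]
        simp only [Nat.sub_self, pow_zero, one_mul]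
        have := hV N
        nlinarith [this, ih]
  -- geometric sum
  have geo : ∀ N : ℕ,
      (1 - lam) * (∑ n ∈ Finset.Icc 1 N, lam ^ (N - n)) = 1 - lam ^ N := by
    intro N
    induction N with
    | zero => simp
    | succ N ih =>
        rw [Finset.sum_Icc_succ_top (by omega)]
        have : (∑ n ∈ Finset.Icc 1 N, lam ^ (N + 1 - n))
            = lam * ∑ n ∈ Finset.Icc 1 N, lam ^ (N - n) := by
          rw [Finset.mul_sum]
          apply Finset.sum_congr rfl
          intro n hn
          simp only [Finset.mem_Icc] at hn
          have : N + 1 - n = (N - n) + 1 := by omega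
          rw [this, pow_succ]; ring
        rw [this]
        simp only [Nat.sub_self, pow_zero]
        rw [pow_succ]
        linear_combination lam * ih
  intro N hN
  have hpow : lam ^ N < 1 := pow_lt_one₀ hlam0.le hlam1 (by omega)
  have h1 : (0:ℝ) < 1 - lam := by linarith
  have h2 : (0:ℝ) < 1 - lam ^ N := by linarith
  have hS : (∑ n ∈ Finset.Icc 1 N, lam ^ (N - n)) = (1 - lam ^ N) / (1 - lam) := by
    field_simp
    linarith [geo N]
  have hSne : (∑ n ∈ Finset.Icc 1 N, lam ^ (N - n)) ≠ 0 := by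
    rw [hS]; positivity
  rw [key N, hS]
  field_simp
end

section
/- If V[N]/N → 0 as N → ∞ and the average input currents converge, Ī[N] → I*, then the scaled firing rates converge to the same limit, a[N] → I*; moreover I* ∈ [0, V_th], so that I* = clamp(I*, 0, V_th) where clamp(x,a,b) := max(a, min(x,b)). -/
open Filter

/-- For the discrete-time IF neuron: if `V N / N → 0` and the average
input currents `Ī N` converge to `Istar`, then the scaled firing rates `a N` converge to
`Istar` as well; moreover `Istar ∈ [0, Vth]`, so that `Istar = clamp(Istar, 0, Vth)`
where `clamp x a b = max a (min x b)`. -/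
theorem if_rate_tendsto_of_mean_tendsto (Vth : ℝ) (hVth : 0 < Vth)
    (I V s : ℕ → ℝ)
    (hV0 : V 0 = 0)
    (hs : ∀ n : ℕ, s (n + 1) = if Vth ≤ V n + I (n + 1) then 1 else 0)
    (hV : ∀ n : ℕ, V (n + 1) = (V n + I (n + 1)) - Vth * s (n + 1))
    (Istar : ℝ)
    (hVN : Tendsto (fun N : ℕ => V N / N) atTop (nhds 0))
    (hI : Tendsto (fun N : ℕ => (1 / (N : ℝ)) * ∑ n ∈ Finset.Icc 1 N, I n)
            atTop (nhds Istar)) :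
    Tendsto (fun N : ℕ => (Vth / N) * ∑ n ∈ Finset.Icc 1 N, s n) atTop (nhds Istar) ∧
    0 ≤ Istar ∧ Istar ≤ Vth ∧ Istar = max 0 (min Istar Vth) := by
  have key : ∀ N : ℕ, V N = (∑ n ∈ Finset.Icc 1 N, I n) - Vth * ∑ n ∈ Finset.Icc 1 N, s n := by
    intro N
    induction N with
    | zero => simp [hV0]
    | succ n ih =>
      rw [Finset.sum_Icc_succ_top (by omega), Finset.sum_Icc_succ_top (by omega), hV n, ih]
      ring
  have heq : ∀ N : ℕ, (Vth / N) * ∑ n ∈ Finset.Icc 1 N, s n =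
      (1 / (N : ℝ)) * ∑ n ∈ Finset.Icc 1 N, I n - V N / N := by
    intro N
    rw [key N]
    by_cases h : (N : ℝ) = 0
    · simp [h]
    · field_simp
      ring
  have hmain : Tendsto (fun N : ℕ => (Vth / N) * ∑ n ∈ Finset.Icc 1 N, s n) atTop (nhds Istar) := by
    have := hI.sub hVN
    simp only [sub_zero] at this
    exact this.congr (fun N => (heq N).symm)
  have h0 : 0 ≤ Istar := by
    refine ge_of_tendsto hmain (eventually_atTop.2 ⟨1, fun N hN => ?_⟩)
    apply mul_nonneg (div_nonneg hVth.le (Nat.cast_nonneg N))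
    apply Finset.sum_nonneg
    intro i hi
    simp only [Finset.mem_Icc] at hi
    obtain ⟨j, rfl⟩ : ∃ j, i = j + 1 := ⟨i - 1, by omega⟩
    rw [hs j]; split <;> norm_num
  have h1 : Istar ≤ Vth := by
    refine le_of_tendsto hmain (eventually_atTop.2 ⟨1, fun N hN => ?_⟩)
    have hNpos : (0:ℝ) < N := by exact_mod_cast hN
    have hsum : ∑ n ∈ Finset.Icc 1 N, s n ≤ (N : ℝ) := by
      calc ∑ n ∈ Finset.Icc 1 N, s n ≤ ∑ n ∈ Finset.Icc 1 N, 1 := by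
            apply Finset.sum_le_sum
            intro i hi
            simp only [Finset.mem_Icc] at hi
            obtain ⟨j, rfl⟩ : ∃ j, i = j + 1 := ⟨i - 1, by omega⟩
            rw [hs j]; split <;> norm_num
        _ = (N : ℝ) := by simp
    calc (Vth / N) * ∑ n ∈ Finset.Icc 1 N, s n ≤ (Vth / N) * N :=
          mul_le_mul_of_nonneg_left hsum (div_nonneg hVth.le hNpos.le)
      _ = Vth := by field_simp
  exact ⟨hmain, h0, h1, by rw [min_eq_left h1, max_eq_right h0]⟩
end

section
/- If the input currents satisfy 0 ≤ I[n] ≤ V_th for all n ≥ 1, then the membrane potential of the IF neuron remains bounded: 0 ≤ V[N] ≤ V_th for all N ≥ 0. Consequently, if in addition Ī[N] → I* as N → ∞, then a[N] → I*. -/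
open Filter

/-- For the discrete-time IF neuron: if the input currents satisfy
`0 ≤ I n ≤ Vth` for all `n ≥ 1`, then the membrane potential remains bounded,
`0 ≤ V N ≤ Vth` for all `N ≥ 0`. Consequently, if in addition the average input
currents converge, `Ī N → Istar`, then the scaled firing rates converge,
`a N → Istar`. -/
theorem if_potential_bounded_and_rate_tendsto (Vth : ℝ) (hVth : 0 < Vth)
    (I V s : ℕ → ℝ)
    (hV0 : V 0 = 0)
    (hs : ∀ n : ℕ, s (n + 1) = if Vth ≤ V n + I (n + 1) then 1 else 0)
    (hV : ∀ n : ℕ, V (n + 1) = (V n + I (n + 1)) - Vth * s (n + 1))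
    (hI : ∀ n : ℕ, 1 ≤ n → 0 ≤ I n ∧ I n ≤ Vth) :
    (∀ N : ℕ, 0 ≤ V N ∧ V N ≤ Vth) ∧
    (∀ Istar : ℝ,
      Tendsto (fun N : ℕ => (1 / (N : ℝ)) * ∑ n ∈ Finset.Icc 1 N, I n)
        atTop (nhds Istar) →
      Tendsto (fun N : ℕ => (Vth / N) * ∑ n ∈ Finset.Icc 1 N, s n)
        atTop (nhds Istar)) := by
  have hbdd : ∀ N : ℕ, 0 ≤ V N ∧ V N < Vth := by
    intro N
    induction N with
    | zero => simp [hV0, hVth]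
    | succ n ih =>
      have hIn := hI (n + 1) (by omega)
      rw [hV n, hs n]
      by_cases h : Vth ≤ V n + I (n + 1) <;> simp [h] <;>
        (try constructor) <;> nlinarith [ih.1, ih.2, hIn.1, hIn.2]
  have htel : ∀ N : ℕ, V N = (∑ n ∈ Finset.Icc 1 N, I n) - Vth * ∑ n ∈ Finset.Icc 1 N, s n := by
    intro N
    induction N with
    | zero => simp [hV0]
    | succ n ih =>
      rw [Finset.sum_Icc_succ_top (by omega), Finset.sum_Icc_succ_top (by omega), hV n, ih]
      ring
  refine ⟨fun N => ⟨(hbdd N).1, (hbdd N).2.le⟩, fun Istar hconv => ?_⟩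
  have key : ∀ N : ℕ, (Vth / N) * ∑ n ∈ Finset.Icc 1 N, s n
      = (1 / (N : ℝ)) * ∑ n ∈ Finset.Icc 1 N, I n - V N / N := by
    intro N
    rw [htel N]
    ring
  have hV0' : Tendsto (fun N : ℕ => V N / N) atTop (nhds 0) := by
    have h1 : Tendsto (fun N : ℕ => Vth / N) atTop (nhds 0) :=
      tendsto_const_nhds.div_atTop tendsto_natCast_atTop_atTop
    refine squeeze_zero' ?_ ?_ h1
    · filter_upwards [eventually_gt_atTop 0] with N hN
      exact div_nonneg (hbdd N).1 (Nat.cast_nonneg N)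
    · filter_upwards [eventually_gt_atTop 0] with N hN
      exact div_le_div_of_nonneg_right (hbdd N).2.le (by exact_mod_cast hN.le)
  simpa [key] using hconv.sub hV0'
end

section
/- For every N ≥ 1, the total number of spikes of the IF neuron is bounded by the largest prefix sum of the input currents: V_th·∑_{n=1}^N s[n] ≤ max(0, max_{1≤m≤N} ∑_{n=1}^m I[n]). -/
/-- For the discrete-time IF neuron, for every `N ≥ 1` the total
number of spikes is bounded by the largest prefix sum of the input currents:
`Vth · ∑_{n=1}^N s n ≤ max(0, max_{1 ≤ m ≤ N} ∑_{n=1}^m I n)`. -/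
theorem if_spike_count_le_max_prefix_sum (Vth : ℝ) (hVth : 0 < Vth)
    (I V s : ℕ → ℝ)
    (hV0 : V 0 = 0)
    (hs : ∀ n : ℕ, s (n + 1) = if Vth ≤ V n + I (n + 1) then 1 else 0)
    (hV : ∀ n : ℕ, V (n + 1) = (V n + I (n + 1)) - Vth * s (n + 1)) :
    ∀ N : ℕ, (hN : 1 ≤ N) →
      Vth * ∑ n ∈ Finset.Icc 1 N, s n
        ≤ max 0 ((Finset.Icc 1 N).sup' (Finset.nonempty_Icc.mpr hN)
            (fun m => ∑ n ∈ Finset.Icc 1 m, I n)) := by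
  -- identity: V n = P n - Vth * S n
  have hid : ∀ n : ℕ, V n = (∑ k ∈ Finset.Icc 1 n, I k) - Vth * ∑ k ∈ Finset.Icc 1 n, s k := by
    intro n
    induction n with
    | zero => simp [hV0]
    | succ m ih =>
      rw [Finset.sum_Icc_succ_top (by omega : 1 ≤ m + 1),
          Finset.sum_Icc_succ_top (by omega : 1 ≤ m + 1), hV m, ih]
      ring
  intro N hN
  induction N, hN using Nat.le_induction with
  | base =>
    have hmem : (1 : ℕ) ∈ Finset.Icc 1 1 := by simp
    have hle := Finset.le_sup' (fun m => ∑ n ∈ Finset.Icc 1 m, I n) hmem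
    rcases le_or_gt Vth (V 0 + I 1) with h | h
    · have hs1 : s 1 = 1 := by rw [hs 0]; simp [h]
      have hV1 : 0 ≤ V 1 := by rw [hV 0, hs1]; linarith
      have : Vth * ∑ n ∈ Finset.Icc 1 1, s n = (∑ n ∈ Finset.Icc 1 1, I n) - V 1 := by
        rw [hid 1]; ring
      rw [this]
      calc (∑ n ∈ Finset.Icc 1 1, I n) - V 1 ≤ ∑ n ∈ Finset.Icc 1 1, I n := by linarith
        _ ≤ _ := le_trans hle (le_max_right _ _)
    · have hs1 : s 1 = 0 := by rw [hs 0]; simp [not_le.mpr h]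
      simp [hs1]
  | succ N hN ih =>
    have hmemN1 : N + 1 ∈ Finset.Icc 1 (N + 1) := by simp
    have hsubset : Finset.Icc 1 N ⊆ Finset.Icc 1 (N + 1) := Finset.Icc_subset_Icc_right (by omega)
    have hsup_mono : (Finset.Icc 1 N).sup' (Finset.nonempty_Icc.mpr hN)
          (fun m => ∑ n ∈ Finset.Icc 1 m, I n)
        ≤ (Finset.Icc 1 (N + 1)).sup' (Finset.nonempty_Icc.mpr (by omega))
          (fun m => ∑ n ∈ Finset.Icc 1 m, I n) := by
      apply Finset.sup'_le
      intro b hb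
      exact Finset.le_sup' (fun m => ∑ n ∈ Finset.Icc 1 m, I n) (hsubset hb)
    rcases le_or_gt Vth (V N + I (N + 1)) with h | h
    · -- spike at N+1, so V (N+1) ≥ 0
      have hs1 : s (N + 1) = 1 := by rw [hs N]; simp [h]
      have hV1 : 0 ≤ V (N + 1) := by rw [hV N, hs1]; linarith
      have key : Vth * ∑ n ∈ Finset.Icc 1 (N + 1), s n
          = (∑ n ∈ Finset.Icc 1 (N + 1), I n) - V (N + 1) := by
        rw [hid (N + 1)]; ring
      rw [key]
      have hle := Finset.le_sup' (fun m => ∑ n ∈ Finset.Icc 1 m, I n) hmemN1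
      calc (∑ n ∈ Finset.Icc 1 (N + 1), I n) - V (N + 1)
          ≤ ∑ n ∈ Finset.Icc 1 (N + 1), I n := by linarith
        _ ≤ _ := le_trans hle (le_max_right _ _)
    · have hs1 : s (N + 1) = 0 := by rw [hs N]; simp [not_le.mpr h]
      rw [Finset.sum_Icc_succ_top (by omega : 1 ≤ N + 1), hs1, add_zero]
      exact le_trans ih (max_le_max le_rfl hsup_mono)
end

section
/- If limsup_{N→∞} Ī[N] < 0, then the IF neuron fires only finitely many spikes (s[n] = 1 for only finitely many n), and consequently the scaled firing rates converge to zero: a[N] → 0 as N → ∞. -/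
open Filter

/-- For the discrete-time IF neuron: if
`limsup_{N→∞} Ī N < 0`, then the neuron fires only finitely many spikes (`s n = 1`
for only finitely many `n ≥ 1`), and consequently the scaled firing rates converge to
zero: `a N → 0`. -/
theorem if_finitely_many_spikes_of_limsup_neg (Vth : ℝ) (hVth : 0 < Vth)
    (I V s : ℕ → ℝ)
    (hV0 : V 0 = 0)
    (hs : ∀ n : ℕ, s (n + 1) = if Vth ≤ V n + I (n + 1) then 1 else 0)
    (hV : ∀ n : ℕ, V (n + 1) = (V n + I (n + 1)) - Vth * s (n + 1))
    (hlimsup : Filter.limsup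
        (fun N : ℕ => (1 / (N : ℝ)) * ∑ n ∈ Finset.Icc 1 N, I n) atTop < 0) :
    {n : ℕ | 1 ≤ n ∧ s n = 1}.Finite ∧
    Tendsto (fun N : ℕ => (Vth / N) * ∑ n ∈ Finset.Icc 1 N, s n)
      atTop (nhds 0) := by
  have hs01 : ∀ n : ℕ, s (n + 1) = 0 ∨ s (n + 1) = 1 := by
    intro n; rw [hs n]; split <;> simp
  have hsnn : ∀ n : ℕ, 1 ≤ n → 0 ≤ s n := by
    intro n hn
    cases n with
    | zero => omega
    | succ m => rcases hs01 m with h | h <;> rw [h] <;> norm_num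
  have hsum : ∀ N : ℕ, ∑ n ∈ Finset.Icc 1 N, I n
      = V N + Vth * ∑ n ∈ Finset.Icc 1 N, s n := by
    intro N
    induction N with
    | zero => simp [hV0]
    | succ k ih =>
      rw [Finset.sum_Icc_succ_top (by omega : 1 ≤ k + 1),
          Finset.sum_Icc_succ_top (by omega : 1 ≤ k + 1), ih, hV k]
      ring
  have hev : ∀ᶠ N : ℕ in atTop, (1 / (N : ℝ)) * ∑ n ∈ Finset.Icc 1 N, I n < 0 := by
    by_cases hb : IsBoundedUnder (· ≤ ·) atTop
        (fun N : ℕ => (1 / (N : ℝ)) * ∑ n ∈ Finset.Icc 1 N, I n)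
    · exact eventually_lt_of_limsup_lt hlimsup hb
    · exfalso
      have h0 : Filter.limsup
          (fun N : ℕ => (1 / (N : ℝ)) * ∑ n ∈ Finset.Icc 1 N, I n) atTop = 0 := by
        rw [Filter.limsup_eq]
        convert Real.sInf_empty using 2
        · rfl
        ext a
        simp only [Set.mem_setOf_eq, Set.mem_empty_iff_false, iff_false]
        intro h
        exact hb ⟨a, by simpa using h⟩
      rw [h0] at hlimsup
      exact lt_irrefl 0 hlimsup
  obtain ⟨N0, hN0⟩ := eventually_atTop.1 hev
  set N1 := max N0 1 with hN1def
  have hno : ∀ n, N1 ≤ n → s n = 0 := by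
    intro n hn
    have hn1 : 1 ≤ n := le_trans (le_max_right _ _) hn
    obtain ⟨m, rfl⟩ : ∃ m, n = m + 1 := ⟨n - 1, by omega⟩
    rcases hs01 m with h | h
    · exact h
    · exfalso
      have hVn : 0 ≤ V (m + 1) := by
        have hcond : Vth ≤ V m + I (m + 1) := by
          by_contra hc
          rw [hs m, if_neg hc] at h; norm_num at h
        rw [hV m, h]; linarith
      have hss : 0 ≤ ∑ n ∈ Finset.Icc 1 (m + 1), s n :=
        Finset.sum_nonneg fun i hi => hsnn i (Finset.mem_Icc.1 hi).1
      have hsumI : 0 ≤ ∑ n ∈ Finset.Icc 1 (m + 1), I n := by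
        rw [hsum (m + 1)]
        have := mul_nonneg hVth.le hss
        linarith
      have hneg := hN0 (m + 1) (le_trans (le_max_left _ _) hn)
      have hpos : (0 : ℝ) ≤ 1 / (((m + 1 : ℕ)) : ℝ) := by positivity
      have := mul_nonneg hpos hsumI
      linarith
  have hfin : {n : ℕ | 1 ≤ n ∧ s n = 1}.Finite := by
    apply Set.Finite.subset (Set.finite_Iio N1)
    rintro n ⟨hn1, hn2⟩
    simp only [Set.mem_Iio]
    by_contra h
    push_neg at h
    rw [hno n h] at hn2
    norm_num at hn2
  refine ⟨hfin, ?_⟩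
  have hconst : ∀ N, N1 ≤ N →
      ∑ n ∈ Finset.Icc 1 N, s n = ∑ n ∈ Finset.Icc 1 N1, s n := by
    intro N hN
    induction N, hN using Nat.le_induction with
    | base => rfl
    | succ k hk ih =>
      rw [Finset.sum_Icc_succ_top (by omega : 1 ≤ k + 1), hno (k + 1) (by omega), ih]
      ring
  have hlim : Tendsto (fun N : ℕ => (Vth * ∑ n ∈ Finset.Icc 1 N1, s n) / N)
      atTop (nhds 0) := tendsto_const_div_atTop_nhds_zero_nat _
  apply hlim.congr'
  filter_upwards [eventually_ge_atTop N1] with N hN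
  rw [hconst N hN]
  ring
end

section
/- If liminf_{N→∞} Ī[N] > V_th, then the IF neuron fails to fire at only finitely many time steps (s[n] = 0 for only finitely many n), and consequently the scaled firing rates converge to the threshold: a[N] → V_th as N → ∞. -/
open Filter

/-- For the discrete-time IF neuron: if
`liminf_{N→∞} Ī N > Vth`, then the neuron fails to fire at only finitely many time
steps (`s n = 0` for only finitely many `n ≥ 1`), and consequently the scaled firing
rates converge to the threshold: `a N → Vth`. -/
theorem if_finitely_many_silences_of_liminf_gt (Vth : ℝ) (hVth : 0 < Vth)
    (I V s : ℕ → ℝ)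
    (hV0 : V 0 = 0)
    (hs : ∀ n : ℕ, s (n + 1) = if Vth ≤ V n + I (n + 1) then 1 else 0)
    (hV : ∀ n : ℕ, V (n + 1) = (V n + I (n + 1)) - Vth * s (n + 1))
    (hliminf : Vth < Filter.liminf
        (fun N : ℕ => (1 / (N : ℝ)) * ∑ n ∈ Finset.Icc 1 N, I n) atTop) :
    {n : ℕ | 1 ≤ n ∧ s n = 0}.Finite ∧
    Tendsto (fun N : ℕ => (Vth / N) * ∑ n ∈ Finset.Icc 1 N, s n)
      atTop (nhds Vth) := by
  -- telescoping identity
  have hsum : ∀ N : ℕ, ∑ n ∈ Finset.Icc 1 N, I n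
      = V N + Vth * ∑ n ∈ Finset.Icc 1 N, s n := by
    intro N
    induction N with
    | zero => simp [hV0]
    | succ N ih =>
        rw [Finset.sum_Icc_succ_top (Nat.le_add_left 1 N),
          Finset.sum_Icc_succ_top (Nat.le_add_left 1 N), hV N]
        rw [ih]; ring
  -- spikes are 0/1
  have hs01 : ∀ n : ℕ, 1 ≤ n → s n = 0 ∨ s n = 1 := by
    intro n hn
    obtain ⟨m, rfl⟩ := Nat.exists_eq_add_of_le hn
    rw [Nat.add_comm, hs m]
    split <;> simp
  -- if the neuron is silent, the potential is below threshold
  have hVlt : ∀ n : ℕ, 1 ≤ n → s n = 0 → V n < Vth := by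
    intro n hn h0
    obtain ⟨m, rfl⟩ := Nat.exists_eq_add_of_le hn
    rw [Nat.add_comm] at h0 ⊢
    have := hs m
    rw [h0] at this
    by_cases hc : Vth ≤ V m + I (m + 1)
    · simp [hc] at this
    · rw [hV m, h0]; push_neg at hc; linarith
  -- basic bounds on the spike sums
  have hsle : ∀ N : ℕ, ∑ n ∈ Finset.Icc 1 N, s n ≤ N := by
    intro N
    calc ∑ n ∈ Finset.Icc 1 N, s n ≤ ∑ n ∈ Finset.Icc 1 N, (1:ℝ) := by
          apply Finset.sum_le_sum
          intro n hn
          rcases hs01 n (Finset.mem_Icc.mp hn).1 with h | h <;> rw [h] <;> norm_num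
       _ = N := by simp
  -- extract an eventual lower bound from the liminf hypothesis
  obtain ⟨a, hVa, haT⟩ : ∃ a : ℝ, Vth < a ∧ ∀ᶠ N : ℕ in atTop,
      a ≤ (1 / (N : ℝ)) * ∑ n ∈ Finset.Icc 1 N, I n := by
    rw [Filter.liminf_eq] at hliminf
    set T := {a : ℝ | ∀ᶠ N : ℕ in atTop,
      a ≤ (1 / (N : ℝ)) * ∑ n ∈ Finset.Icc 1 N, I n}
    rcases T.eq_empty_or_nonempty with hT | hT
    · rw [hT, Real.sSup_empty] at hliminf; linarith
    · obtain ⟨a, haT, hVa'⟩ := exists_lt_of_lt_csSup hT hliminf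
      exact ⟨a, hVa', haT⟩
  obtain ⟨N₀, hN₀⟩ := Filter.eventually_atTop.mp haT
  -- First part: finitely many silences
  have hfin : {n : ℕ | 1 ≤ n ∧ s n = 0}.Finite := by
    by_contra hinf
    have hinf' : {n : ℕ | 1 ≤ n ∧ s n = 0}.Infinite := hinf
    set K := ⌈Vth / (a - Vth)⌉₊ with hK
    obtain ⟨N, hNS, hNg⟩ := hinf'.exists_gt (max N₀ (K + 1))
    obtain ⟨hN1, hNs0⟩ := hNS
    have hNN₀ : N₀ ≤ N := le_trans (le_max_left _ _) hNg.le
    have hNK : K + 1 ≤ N := le_trans (le_max_right _ _) hNg.le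
    have hNpos : (0:ℝ) < N := by exact_mod_cast hN1
    have ha' : a * N ≤ ∑ n ∈ Finset.Icc 1 N, I n := by
      have := hN₀ N hNN₀
      rw [one_div, inv_mul_eq_div, le_div_iff₀ hNpos] at this
      exact this
    have hVN : V N < Vth := hVlt N hN1 hNs0
    have hIb : ∑ n ∈ Finset.Icc 1 N, I n < Vth + Vth * N := by
      rw [hsum N]
      have := hsle N
      nlinarith [hsle N]
    have hKa : Vth ≤ (K : ℝ) * (a - Vth) := by
      have h1 : Vth / (a - Vth) ≤ (K : ℝ) := Nat.le_ceil _
      exact (div_le_iff₀ (by linarith)).mp h1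
    have hKN : (K : ℝ) + 1 ≤ (N : ℝ) := by exact_mod_cast hNK
    nlinarith
  refine ⟨hfin, ?_⟩
  -- Second part: convergence of the firing rate
  set F := hfin.toFinset with hFdef
  have hF : ∀ n, 1 ≤ n → s n = 0 → n ∈ F := by
    intro n h1 h0
    rw [hFdef, Set.Finite.mem_toFinset]
    exact ⟨h1, h0⟩
  set C := (F.card : ℝ) with hC
  -- count of silences bound
  have hcount : ∀ N : ℕ, (N : ℝ) - ∑ n ∈ Finset.Icc 1 N, s n ≤ C := by
    intro N
    have h1 : (N : ℝ) - ∑ n ∈ Finset.Icc 1 N, s n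
        = ∑ n ∈ Finset.Icc 1 N, (1 - s n) := by
      rw [Finset.sum_sub_distrib]
      simp [Nat.card_Icc]
    rw [h1]
    have h2 : ∑ n ∈ Finset.Icc 1 N, (1 - s n)
        = ∑ n ∈ (Finset.Icc 1 N).filter (fun n => s n = 0), (1 - s n) := by
      rw [Finset.sum_filter_of_ne]
      intro n hn hne
      rcases hs01 n (Finset.mem_Icc.mp hn).1 with h | h
      · exact h
      · exact absurd (by rw [h]; ring) hne
    rw [h2]
    calc ∑ n ∈ (Finset.Icc 1 N).filter (fun n => s n = 0), (1 - s n)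
        = ∑ n ∈ (Finset.Icc 1 N).filter (fun n => s n = 0), (1:ℝ) := by
          apply Finset.sum_congr rfl
          intro n hn
          rw [(Finset.mem_filter.mp hn).2]; ring
      _ = ((Finset.Icc 1 N).filter (fun n => s n = 0)).card := by simp
      _ ≤ C := by
          have hsub : (Finset.Icc 1 N).filter (fun n => s n = 0) ⊆ F := by
            intro n hn
            rw [Finset.mem_filter] at hn
            exact hF n (Finset.mem_Icc.mp hn.1).1 hn.2
          rw [hC]
          exact_mod_cast Finset.card_le_card hsub
  -- squeeze
  have hub : ∀ᶠ N : ℕ in atTop,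
      (Vth / N) * ∑ n ∈ Finset.Icc 1 N, s n ≤ Vth := by
    filter_upwards [Filter.eventually_ge_atTop 1] with N hN1
    have hNpos : (0:ℝ) < N := by exact_mod_cast hN1
    have := hsle N
    calc (Vth / N) * ∑ n ∈ Finset.Icc 1 N, s n
        ≤ (Vth / N) * N := by
          apply mul_le_mul_of_nonneg_left this (by positivity)
      _ = Vth := by field_simp
  have hlb : ∀ᶠ N : ℕ in atTop,
      Vth - Vth * C / N ≤ (Vth / N) * ∑ n ∈ Finset.Icc 1 N, s n := by
    filter_upwards [Filter.eventually_ge_atTop 1] with N hN1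
    have hNpos : (0:ℝ) < N := by exact_mod_cast hN1
    have hge : (N : ℝ) - C ≤ ∑ n ∈ Finset.Icc 1 N, s n := by
      have := hcount N; linarith
    calc Vth - Vth * C / N = (Vth / N) * ((N : ℝ) - C) := by
          field_simp
      _ ≤ (Vth / N) * ∑ n ∈ Finset.Icc 1 N, s n :=
          mul_le_mul_of_nonneg_left hge (by positivity)
  have hlim : Tendsto (fun N : ℕ => Vth - Vth * C / N) atTop (nhds Vth) := by
    have := (tendsto_const_nhds (x := Vth) (f := atTop (α := ℕ))).sub
      (tendsto_const_div_atTop_nhds_zero_nat (Vth * C))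
    simpa using this
  exact tendsto_of_tendsto_of_tendsto_of_le_of_le' hlim tendsto_const_nhds hlb hub
end

section
/- Suppose (1/N)·∑_{n=1}^N x[n] → u ∈ ℝ^m as N → ∞, and for each output coordinate j, writing c_j := (W·u)_j, assume: (a) if c_j < 0 then s[n]_j = 1 for only finitely many n; (b) if c_j > V_th then s[n]_j = 0 for only finitely many n; (c) if 0 ≤ c_j ≤ V_th then V[N]_j/N → 0. Then for every coordinate j, the scaled firing rate converges: a[N]_j → clamp(c_j, 0, V_th), where clamp(x,a,b) := max(a, min(x,b)). -/
open Filter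

/-- One layer of `d` IF neurons with weight matrix `W : ℝ^{d×m}` and
threshold `Vth > 0`, driven by inputs `x : ℕ → ℝ^m`. If the time-averaged inputs
converge to `u`, and for each output coordinate `j` (writing `c_j = (W·u)_j`):
(a) if `c_j < 0` then `s n j = 1` for only finitely many `n`;
(b) if `c_j > Vth` then `s n j = 0` for only finitely many `n`;
(c) if `0 ≤ c_j ≤ Vth` then `V N j / N → 0`;
then for every coordinate `j` the scaled firing rate converges to
`clamp(c_j, 0, Vth) = max 0 (min c_j Vth)`. -/
theorem if_layer_rate_tendsto_clamp (d m : ℕ) (W : Matrix (Fin d) (Fin m) ℝ)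
    (Vth : ℝ) (hVth : 0 < Vth)
    (x : ℕ → Fin m → ℝ) (V s : ℕ → Fin d → ℝ)
    (hV0 : ∀ j, V 0 j = 0)
    (hs : ∀ n : ℕ, ∀ j, s (n + 1) j
            = if Vth ≤ V n j + W.mulVec (x (n + 1)) j then 1 else 0)
    (hV : ∀ n : ℕ, ∀ j, V (n + 1) j
            = (V n j + W.mulVec (x (n + 1)) j) - Vth * s (n + 1) j)
    (u : Fin m → ℝ)
    (hx : ∀ k, Tendsto (fun N : ℕ => (1 / (N : ℝ)) * ∑ n ∈ Finset.Icc 1 N, x n k)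
            atTop (nhds (u k)))
    (ha : ∀ j, W.mulVec u j < 0 → {n : ℕ | 1 ≤ n ∧ s n j = 1}.Finite)
    (hb : ∀ j, Vth < W.mulVec u j → {n : ℕ | 1 ≤ n ∧ s n j = 0}.Finite)
    (hc : ∀ j, 0 ≤ W.mulVec u j → W.mulVec u j ≤ Vth →
            Tendsto (fun N : ℕ => V N j / N) atTop (nhds 0)) :
    ∀ j, Tendsto (fun N : ℕ => (Vth / N) * ∑ n ∈ Finset.Icc 1 N, s n j)
          atTop (nhds (max 0 (min (W.mulVec u j) Vth))) := by
  intro j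
  set c := W.mulVec u j with hc_def
  have hIcc : ∀ k : ℕ, Finset.Icc 1 k = Finset.Ioc 0 k := fun k => Finset.Icc_add_one_left_eq_Ioc 0 k
  -- s takes values in {0,1} for n ≥ 1
  have hs01 : ∀ n : ℕ, 1 ≤ n → s n j = 0 ∨ s n j = 1 := by
    intro n hn
    cases n with
    | zero => omega
    | succ k =>
      rw [hs]
      split <;> simp
  -- split lemma
  have hsplit : ∀ (f : ℕ → ℝ) (M N : ℕ), M ≤ N →
      ∑ n ∈ Finset.Icc 1 N, f n
        = (∑ n ∈ Finset.Icc 1 M, f n) + ∑ n ∈ Finset.Ioc M N, f n := by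
    intro f M N hN
    rw [hIcc, hIcc, Finset.sum_Ioc_consecutive _ (Nat.zero_le M) hN]
  -- limit of averaged inputs through W
  have havg : Tendsto (fun N : ℕ => (1 / (N : ℝ)) * ∑ n ∈ Finset.Icc 1 N,
      W.mulVec (x n) j) atTop (nhds c) := by
    have heq : ∀ N : ℕ, (1 / (N : ℝ)) * ∑ n ∈ Finset.Icc 1 N, W.mulVec (x n) j
        = ∑ k : Fin m, W j k * ((1 / (N : ℝ)) * ∑ n ∈ Finset.Icc 1 N, x n k) := by
      intro N
      simp only [Matrix.mulVec, dotProduct]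
      rw [Finset.sum_comm, Finset.mul_sum]
      refine Finset.sum_congr rfl fun k _ => ?_
      rw [Finset.mul_sum, Finset.mul_sum, Finset.mul_sum]
      exact Finset.sum_congr rfl fun n _ => by ring
    simp only [heq]
    have hcval : c = ∑ k : Fin m, W j k * u k := by
      simp [hc_def, Matrix.mulVec, dotProduct]
    rw [hcval]
    exact tendsto_finset_sum _ (fun k _ => (hx k).const_mul (W j k))
  rcases lt_or_ge c 0 with hneg | hnonneg
  · -- case (a): clamp = 0
    have hcl : max 0 (min c Vth) = 0 := by
      rw [max_eq_left]
      exact le_trans (min_le_left _ _) hneg.le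
    rw [hcl]
    obtain ⟨M, hM⟩ := (ha j hneg).bddAbove
    have hzero : ∀ n : ℕ, M < n → s n j = 0 := by
      intro n hn
      rcases hs01 n (by omega) with h | h
      · exact h
      · exact absurd (hM ⟨by omega, h⟩) (by omega)
    have hev : ∀ N : ℕ, M ≤ N → (∑ n ∈ Finset.Icc 1 N, s n j)
        = ∑ n ∈ Finset.Icc 1 M, s n j := by
      intro N hN
      rw [hsplit _ M N hN,
        Finset.sum_eq_zero (fun n hn => hzero n (Finset.mem_Ioc.mp hn).1), add_zero]
    have hlim : Tendsto (fun N : ℕ => (Vth / N) * ∑ n ∈ Finset.Icc 1 M, s n j)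
        atTop (nhds 0) := by
      have := (tendsto_const_div_atTop_nhds_zero_nat Vth).mul_const
        (∑ n ∈ Finset.Icc 1 M, s n j)
      simpa using this
    refine hlim.congr' ?_
    filter_upwards [eventually_ge_atTop M] with N hN
    rw [hev N hN]
  rcases le_or_gt c Vth with hle | hgt
  · -- case (c): clamp = c
    have hcl : max 0 (min c Vth) = c := by
      rw [min_eq_left hle, max_eq_right hnonneg]
    rw [hcl]
    have key : ∀ N : ℕ, V N j = (∑ n ∈ Finset.Icc 1 N, W.mulVec (x n) j)
        - Vth * ∑ n ∈ Finset.Icc 1 N, s n j := by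
      intro N
      induction N with
      | zero => simp [hV0]
      | succ N ih =>
        rw [hV N j, ih, hIcc, hIcc,
          Finset.sum_Ioc_succ_top (Nat.zero_le N), Finset.sum_Ioc_succ_top (Nat.zero_le N)]
        ring
    have hVlim := hc j hnonneg hle
    have hsub : Tendsto (fun N : ℕ => (1 / (N : ℝ)) * ∑ n ∈ Finset.Icc 1 N,
        W.mulVec (x n) j - V N j / N) atTop (nhds (c - 0)) := havg.sub hVlim
    rw [sub_zero] at hsub
    refine hsub.congr ?_
    intro N
    rw [key N]
    rcases eq_or_ne (N : ℝ) 0 with h0 | h0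
    · simp [h0]
    · field_simp
      ring
  · -- case (b): clamp = Vth
    have hcl : max 0 (min c Vth) = Vth := by
      rw [min_eq_right hgt.le, max_eq_right hVth.le]
    rw [hcl]
    obtain ⟨M, hM⟩ := (hb j hgt).bddAbove
    have hone : ∀ n : ℕ, M < n → s n j = 1 := by
      intro n hn
      rcases hs01 n (by omega) with h | h
      · exact absurd (hM ⟨by omega, h⟩) (by omega)
      · exact h
    have hev : ∀ N : ℕ, M ≤ N → (∑ n ∈ Finset.Icc 1 N, s n j)
        = (∑ n ∈ Finset.Icc 1 M, s n j) + ((N : ℝ) - M) := by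
      intro N hN
      rw [hsplit _ M N hN]
      congr 1
      rw [Finset.sum_congr rfl (fun n hn => hone n (Finset.mem_Ioc.mp hn).1),
        Finset.sum_const, Nat.card_Ioc, nsmul_eq_mul, mul_one, Nat.cast_sub hN]
    have hlim : Tendsto (fun N : ℕ =>
        (Vth / N) * ((∑ n ∈ Finset.Icc 1 M, s n j) - M) + Vth) atTop (nhds Vth) := by
      have h1 := (tendsto_const_div_atTop_nhds_zero_nat Vth).mul_const
        ((∑ n ∈ Finset.Icc 1 M, s n j) - (M : ℝ))
      have := h1.add_const Vth
      simpa using this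
    refine hlim.congr' ?_
    filter_upwards [eventually_ge_atTop M, eventually_ge_atTop 1] with N hN hN1
    rw [hev N hN]
    have hNne : (N : ℝ) ≠ 0 := by positivity
    field_simp
    ring
end

section
/- (Proposition 2) Suppose a^0[N] → z^0 as N → ∞, and define z^i = clamp(W^i·z^{i−1}, 0, V_th^i) componentwise for i = 1,…,L, where clamp(x,a,b) := max(a, min(x,b)). Assume for every layer i and coordinate j, writing c := (W^i·z^{i−1})_j: (a) if c < 0 then s^i[n]_j = 1 for only finitely many n; (b) if c > V_th^i then s^i[n]_j = 0 for only finitely many n; (c) if 0 ≤ c ≤ V_th^i then V^i[N]_j/N → 0. Then for every i = 1,…,L, the scaled firing rates converge: a^i[N] → z^i as N → ∞. -/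
open Filter


lemma aux_bdd_sum_tendsto (C : ℝ) (g : ℕ → ℝ)
    (hg : ∀ n, 1 ≤ n → g n = 0 ∨ g n = 1)
    (hF : {n : ℕ | 1 ≤ n ∧ g n = 1}.Finite) :
    Tendsto (fun N : ℕ => (C / N) * ∑ n ∈ Finset.Icc 1 N, g n) atTop (nhds 0) := by
  set M : ℝ := (hF.toFinset.card : ℝ) with hM
  have hSnn : ∀ N : ℕ, 0 ≤ ∑ n ∈ Finset.Icc 1 N, g n := by
    intro N
    refine Finset.sum_nonneg fun n hn => ?_
    rcases hg n (Finset.mem_Icc.mp hn).1 with h | h <;> simp [h]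
  have hSle : ∀ N : ℕ, ∑ n ∈ Finset.Icc 1 N, g n ≤ M := by
    intro N
    calc ∑ n ∈ Finset.Icc 1 N, g n
        ≤ ∑ n ∈ Finset.Icc 1 N, (if n ∈ hF.toFinset then (1:ℝ) else 0) := by
          refine Finset.sum_le_sum fun n hn => ?_
          rcases hg n (Finset.mem_Icc.mp hn).1 with h | h
          · rw [h]; split <;> norm_num
          · rw [h]
            have : n ∈ hF.toFinset := by
              simp only [Set.Finite.mem_toFinset, Set.mem_setOf_eq]
              exact ⟨(Finset.mem_Icc.mp hn).1, h⟩
            simp [this]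
      _ = ((Finset.Icc 1 N).filter (· ∈ hF.toFinset)).card := by
          rw [Finset.sum_boole]
      _ ≤ M := by
          rw [hM]
          exact_mod_cast Finset.card_le_card fun x hx => (Finset.mem_filter.mp hx).2
  have hbound : Tendsto (fun N : ℕ => |C| * M / N) atTop (nhds 0) :=
    tendsto_const_div_atTop_nhds_zero_nat _
  refine squeeze_zero_norm (fun N => ?_) hbound
  have hN : (0:ℝ) ≤ (N:ℝ) := Nat.cast_nonneg N
  rw [Real.norm_eq_abs, abs_mul, abs_div, abs_of_nonneg hN, abs_of_nonneg (hSnn N)]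
  rw [div_mul_eq_mul_div, mul_div_assoc, mul_div_assoc]
  rcases Nat.eq_zero_or_pos N with h0 | h0
  · simp [h0]
  · have hNpos : (0:ℝ) < N := by exact_mod_cast h0
    exact mul_le_mul_of_nonneg_left (div_le_div_of_nonneg_right (hSle N) hNpos.le) (abs_nonneg C)


/-- **Proposition 2.** An `L`-layer feedforward IF spiking network with
layer sizes `d 0, …, d L`, weights `W i : ℝ^{d (i+1) × d i}` (feeding layer `i+1`),
thresholds `Vth i > 0` for `1 ≤ i ≤ L` with the convention `Vth 0 = 1`, and input
sequence `s 0 : ℕ → ℝ^{d 0}`. Suppose the input representation `a⁰ N → z 0`, define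
`z (i+1) = clamp(W i · z i, 0, Vth (i+1))` componentwise, and assume for each layer
`i+1 ≤ L` and coordinate `j`, writing `c = (W i · z i)_j`:
(a) if `c < 0` then layer `i+1` fires at `j` only finitely often;
(b) if `c > Vth (i+1)` then layer `i+1` is silent at `j` only finitely often;
(c) if `0 ≤ c ≤ Vth (i+1)` then `V (i+1) N j / N → 0`.
Then for every `i = 1, …, L` the scaled firing rates converge: `aⁱ N → z i`. -/
theorem if_network_rate_tendsto (L : ℕ) (d : ℕ → ℕ)
    (W : (i : ℕ) → Matrix (Fin (d (i + 1))) (Fin (d i)) ℝ)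
    (Vth : ℕ → ℝ) (hVth0 : Vth 0 = 1)
    (hVth : ∀ i : ℕ, 1 ≤ i → i ≤ L → 0 < Vth i)
    (s : (i : ℕ) → ℕ → Fin (d i) → ℝ)
    (V : (i : ℕ) → ℕ → Fin (d i) → ℝ)
    (hV0 : ∀ i : ℕ, i < L → ∀ j, V (i + 1) 0 j = 0)
    (hs : ∀ i : ℕ, i < L → ∀ n : ℕ, ∀ j,
      s (i + 1) (n + 1) j
        = if Vth (i + 1)
              ≤ V (i + 1) n j + Vth i * (W i).mulVec (s i (n + 1)) j
          then 1 else 0)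
    (hV : ∀ i : ℕ, i < L → ∀ n : ℕ, ∀ j,
      V (i + 1) (n + 1) j
        = (V (i + 1) n j + Vth i * (W i).mulVec (s i (n + 1)) j)
            - Vth (i + 1) * s (i + 1) (n + 1) j)
    (z : (i : ℕ) → Fin (d i) → ℝ)
    (hz0 : ∀ j, Tendsto (fun N : ℕ => (1 / (N : ℝ)) * ∑ n ∈ Finset.Icc 1 N, s 0 n j)
            atTop (nhds (z 0 j)))
    (hzrec : ∀ i : ℕ, i < L → ∀ j,
      z (i + 1) j = max 0 (min ((W i).mulVec (z i) j) (Vth (i + 1))))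
    (ha : ∀ i : ℕ, i < L → ∀ j, (W i).mulVec (z i) j < 0 →
      {n : ℕ | 1 ≤ n ∧ s (i + 1) n j = 1}.Finite)
    (hb : ∀ i : ℕ, i < L → ∀ j, Vth (i + 1) < (W i).mulVec (z i) j →
      {n : ℕ | 1 ≤ n ∧ s (i + 1) n j = 0}.Finite)
    (hc : ∀ i : ℕ, i < L → ∀ j,
      0 ≤ (W i).mulVec (z i) j → (W i).mulVec (z i) j ≤ Vth (i + 1) →
      Tendsto (fun N : ℕ => V (i + 1) N j / N) atTop (nhds 0)) :
    ∀ i : ℕ, 1 ≤ i → i ≤ L → ∀ j,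
      Tendsto (fun N : ℕ => (Vth i / N) * ∑ n ∈ Finset.Icc 1 N, s i n j)
        atTop (nhds (z i j)) := by
  -- main statement strengthened to all i ≤ L (including i = 0 via Vth 0 = 1)
  suffices main : ∀ i : ℕ, i ≤ L → ∀ j,
      Tendsto (fun N : ℕ => (Vth i / N) * ∑ n ∈ Finset.Icc 1 N, s i n j)
        atTop (nhds (z i j)) by
    intro i _ hiL j; exact main i hiL j
  intro i
  induction i with
  | zero =>
    intro _ j
    simpa [hVth0] using hz0 j
  | succ i IH =>
    intro hiL j
    have hi' : i < L := hiL
    have IH' := IH (Nat.le_of_succ_le hiL)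
    -- telescoping identity
    have key : ∀ N : ℕ, ∀ j : Fin (d (i+1)),
        Vth (i+1) * ∑ n ∈ Finset.Icc 1 N, s (i+1) n j
          = Vth i * (W i).mulVec (fun k => ∑ n ∈ Finset.Icc 1 N, s i n k) j
            - V (i+1) N j := by
      intro N
      induction N with
      | zero => intro j; simp [Matrix.mulVec, dotProduct, hV0 i hi' j]
      | succ N IHN =>
        intro j
        have h1 : (1:ℕ) ≤ N + 1 := Nat.le_add_left 1 N
        rw [Finset.sum_Icc_succ_top h1, hV i hi' N j]
        have hvadd : (fun k => ∑ n ∈ Finset.Icc 1 (N+1), s i n k)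
            = (fun k => ∑ n ∈ Finset.Icc 1 N, s i n k) + s i (N+1) := by
          funext k
          simp [Finset.sum_Icc_succ_top h1]
        have hmv : (W i).mulVec (fun k => ∑ n ∈ Finset.Icc 1 (N+1), s i n k) j
            = (W i).mulVec (fun k => ∑ n ∈ Finset.Icc 1 N, s i n k) j
              + (W i).mulVec (s i (N+1)) j := by
          rw [hvadd, Matrix.mulVec_add, Pi.add_apply]
        rw [hmv]
        have := IHN j
        ring_nf
        ring_nf at this
        linarith [this]
    -- the rate identity
    have heq : ∀ N : ℕ,
        (Vth (i+1) / (N:ℝ)) * ∑ n ∈ Finset.Icc 1 N, s (i+1) n j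
          = (W i).mulVec (fun k => (Vth i / N) * ∑ n ∈ Finset.Icc 1 N, s i n k) j
            - V (i+1) N j / N := by
      intro N
      have hmv : (W i).mulVec (fun k => (Vth i / N) * ∑ n ∈ Finset.Icc 1 N, s i n k) j
          = (Vth i / N) * (W i).mulVec (fun k => ∑ n ∈ Finset.Icc 1 N, s i n k) j := by
        have hv : (fun k => (Vth i / (N:ℝ)) * ∑ n ∈ Finset.Icc 1 N, s i n k)
            = (Vth i / (N:ℝ)) • (fun k => ∑ n ∈ Finset.Icc 1 N, s i n k) := rfl
        rw [hv, Matrix.mulVec_smul, Pi.smul_apply, smul_eq_mul]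
      rw [hmv, div_mul_eq_mul_div, key N j, sub_div, div_mul_eq_mul_div, mul_div_assoc]
    -- convergence of the mulVec term
    have hmvc : Tendsto
        (fun N : ℕ => (W i).mulVec (fun k => (Vth i / N) * ∑ n ∈ Finset.Icc 1 N, s i n k) j)
        atTop (nhds ((W i).mulVec (z i) j)) := by
      simp only [Matrix.mulVec, dotProduct]
      exact tendsto_finset_sum _ fun k _ => (IH' k).const_mul _
    -- spikes are 0/1
    have hs01 : ∀ n : ℕ, 1 ≤ n → s (i+1) n j = 0 ∨ s (i+1) n j = 1 := by
      intro n hn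
      cases n with
      | zero => exact absurd hn (by omega)
      | succ m =>
        rw [hs i hi' m j]
        split <;> simp
    rcases lt_trichotomy ((W i).mulVec (z i) j) 0 with hcase | hcase | hcase
    · -- c < 0 : z = 0, finitely many spikes
      have hzj : z (i+1) j = 0 := by
        rw [hzrec i hi' j]
        have hVpos := hVth (i+1) (Nat.le_add_left 1 i) hiL
        rw [min_eq_left (le_of_lt (lt_trans hcase hVpos)), max_eq_left (le_of_lt hcase)]
      rw [hzj]
      exact aux_bdd_sum_tendsto (Vth (i+1)) (fun n => s (i+1) n j) hs01 (ha i hi' j hcase)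
    · -- c = 0 or generally 0 ≤ c ≤ Vth handled together below; here c = 0
      have h0 : (0:ℝ) ≤ (W i).mulVec (z i) j := le_of_eq hcase.symm
      have hVpos := hVth (i+1) (Nat.le_add_left 1 i) hiL
      have hle : (W i).mulVec (z i) j ≤ Vth (i+1) := by rw [hcase]; exact le_of_lt hVpos
      have hzj : z (i+1) j = (W i).mulVec (z i) j := by
        rw [hzrec i hi' j, min_eq_left hle, max_eq_right h0]
      rw [hzj]
      have := hmvc.sub (hc i hi' j h0 hle)
      rw [sub_zero] at this
      exact this.congr fun N => (heq N).symm
    · rcases le_or_gt ((W i).mulVec (z i) j) (Vth (i+1)) with hle | hgt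
      · -- 0 < c ≤ Vth
        have h0 : (0:ℝ) ≤ (W i).mulVec (z i) j := le_of_lt hcase
        have hzj : z (i+1) j = (W i).mulVec (z i) j := by
          rw [hzrec i hi' j, min_eq_left hle, max_eq_right h0]
        rw [hzj]
        have := hmvc.sub (hc i hi' j h0 hle)
        rw [sub_zero] at this
        exact this.congr fun N => (heq N).symm
      · -- c > Vth : z = Vth, silent only finitely often
        have hVpos := hVth (i+1) (Nat.le_add_left 1 i) hiL
        have hzj : z (i+1) j = Vth (i+1) := by
          rw [hzrec i hi' j, min_eq_right (le_of_lt hgt), max_eq_right (le_of_lt hVpos)]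
        rw [hzj]
        set g : ℕ → ℝ := fun n => 1 - s (i+1) n j with hg
        have hg01 : ∀ n, 1 ≤ n → g n = 0 ∨ g n = 1 := by
          intro n hn; rcases hs01 n hn with h | h <;> simp [hg, h]
        have hgfin : {n : ℕ | 1 ≤ n ∧ g n = 1}.Finite := by
          have hset : {n : ℕ | 1 ≤ n ∧ g n = 1} = {n : ℕ | 1 ≤ n ∧ s (i+1) n j = 0} := by
            ext n; simp only [Set.mem_setOf_eq, hg]
            constructor
            · rintro ⟨h1, h2⟩; exact ⟨h1, by linarith⟩
            · rintro ⟨h1, h2⟩; exact ⟨h1, by linarith⟩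
          rw [hset]; exact hb i hi' j hgt
        have hgz := aux_bdd_sum_tendsto (Vth (i+1)) g hg01 hgfin
        have hconst : Tendsto (fun _ : ℕ => Vth (i+1)) atTop (nhds (Vth (i+1))) :=
          tendsto_const_nhds
        have hfinal := hconst.sub hgz
        rw [sub_zero] at hfinal
        refine hfinal.congr' ?_
        filter_upwards [eventually_ge_atTop 1] with N hN
        have hNpos : (0:ℝ) < N := by exact_mod_cast hN
        have hcard : (Finset.Icc 1 N).card = N := by rw [Nat.card_Icc]; omega
        have hsum : ∑ n ∈ Finset.Icc 1 N, g n
            = (N:ℝ) - ∑ n ∈ Finset.Icc 1 N, s (i+1) n j := by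
          simp [hg, Finset.sum_sub_distrib, hcard]
        rw [hsum]
        field_simp
        ring
end

section
/- If 0 ≤ V[N] ≤ V_th for all N ≥ 0 and the weighted average input currents converge, Î[N] → I*, then the scaled weighted firing rates satisfy limsup_{N→∞} |â[N] − ((1−λ)/Δt)·I*| ≤ (1−λ)·V_th/Δt. -/
open Filter

/-- For the discrete-time LIF neuron with threshold `Vth > 0`, leak
factor `lam ∈ (0,1)` and discretization step `dt > 0`: if `0 ≤ V N ≤ Vth` for all
`N ≥ 0` and the weighted average input currents converge, `Î N → Istar`, then the
scaled weighted firing rates satisfy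
`limsup_{N→∞} |â N − ((1 − lam)/dt) · Istar| ≤ (1 − lam) · Vth / dt`. -/
theorem lif_rate_limsup_bound (Vth lam dt : ℝ) (hVth : 0 < Vth)
    (hlam0 : 0 < lam) (hlam1 : lam < 1) (hdt : 0 < dt)
    (I V s : ℕ → ℝ)
    (hV0 : V 0 = 0)
    (hs : ∀ n : ℕ, s (n + 1) = if Vth ≤ lam * V n + (1 - lam) * I (n + 1) then 1 else 0)
    (hV : ∀ n : ℕ, V (n + 1) = (lam * V n + (1 - lam) * I (n + 1)) - Vth * s (n + 1))
    (hbound : ∀ N : ℕ, 0 ≤ V N ∧ V N ≤ Vth)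
    (Istar : ℝ)
    (hI : Tendsto (fun N : ℕ => (∑ n ∈ Finset.Icc 1 N, lam ^ (N - n) * I n)
            / (∑ n ∈ Finset.Icc 1 N, lam ^ (N - n))) atTop (nhds Istar)) :
    Filter.limsup (fun N : ℕ =>
        |Vth * (∑ n ∈ Finset.Icc 1 N, lam ^ (N - n) * s n)
            / (dt * ∑ n ∈ Finset.Icc 1 N, lam ^ (N - n))
          - ((1 - lam) / dt) * Istar|) atTop
      ≤ (1 - lam) * Vth / dt := by
  have hlam1' : (0:ℝ) < 1 - lam := by linarith
  set W : ℕ → ℝ := fun N => ∑ n ∈ Finset.Icc 1 N, lam ^ (N - n) with hWdef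
  set A : ℕ → ℝ := fun N => ∑ n ∈ Finset.Icc 1 N, lam ^ (N - n) * I n with hAdef
  set B : ℕ → ℝ := fun N => ∑ n ∈ Finset.Icc 1 N, lam ^ (N - n) * s n with hBdef
  have hshift : ∀ (F : ℕ → ℝ) (N : ℕ),
      (∑ n ∈ Finset.Icc 1 (N+1), lam ^ (N + 1 - n) * F n)
        = lam * (∑ n ∈ Finset.Icc 1 N, lam ^ (N - n) * F n) + F (N+1) := by
    intro F N
    rw [Finset.sum_Icc_succ_top (by omega : 1 ≤ N + 1)]
    simp only [Nat.sub_self, pow_zero, one_mul]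
    congr 1
    rw [Finset.mul_sum]
    apply Finset.sum_congr rfl
    intro n hn
    have hn' : n ≤ N := (Finset.mem_Icc.mp hn).2
    have h : N + 1 - n = (N - n) + 1 := by omega
    rw [h, pow_succ']
    ring
  have hWrec : ∀ N, W (N+1) = lam * W N + 1 := by
    intro N
    have := hshift (fun _ => 1) N
    simpa [hWdef] using this
  have hWgeom : ∀ N, W N = (1 - lam ^ N) / (1 - lam) := by
    intro N
    induction N with
    | zero => simp [hWdef]
    | succ n ih =>
      rw [hWrec n, ih, pow_succ]
      field_simp
      ring
  have hWge : ∀ N, 1 ≤ N → 1 ≤ W N := by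
    intro N hN
    rw [hWgeom, le_div_iff₀ hlam1']
    have : lam ^ N ≤ lam ^ 1 := pow_le_pow_of_le_one hlam0.le hlam1.le hN
    simpa using by nlinarith
  have hpow : Tendsto (fun N : ℕ => lam ^ N) atTop (nhds 0) :=
    tendsto_pow_atTop_nhds_zero_of_lt_one hlam0.le hlam1
  have hWtend : Tendsto W atTop (nhds (1 / (1 - lam))) := by
    have h : Tendsto (fun N : ℕ => (1 - lam ^ N) / (1 - lam)) atTop
        (nhds ((1 - 0) / (1 - lam))) := (tendsto_const_nhds.sub hpow).div_const _
    rw [show (1:ℝ) - 0 = 1 by ring] at h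
    exact h.congr fun N => (hWgeom N).symm
  have hkey : ∀ N, V N = (1 - lam) * A N - Vth * B N := by
    intro N
    induction N with
    | zero => simp [hV0, hAdef, hBdef]
    | succ n ih =>
      have hA : A (n+1) = lam * A n + I (n+1) := hshift I n
      have hB : B (n+1) = lam * B n + s (n+1) := hshift s n
      rw [hV n, ih, hA, hB]
      ring
  set g : ℕ → ℝ := fun N => (1 - lam) / dt * |A N / W N - Istar| + Vth / (dt * W N)
    with hgdef
  have hmain : ∀ N, 1 ≤ N →
      |Vth * B N / (dt * W N) - (1 - lam) / dt * Istar| ≤ g N := by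
    intro N hN
    have hWpos : (0:ℝ) < W N := lt_of_lt_of_le one_pos (hWge N hN)
    have h1 : Vth * B N / (dt * W N) - (1 - lam) / dt * Istar
        = (1 - lam) / dt * (A N / W N - Istar) - V N / (dt * W N) := by
      have h2 : Vth * B N = (1 - lam) * A N - V N := by rw [hkey N]; ring
      rw [h2]
      field_simp
      ring
    rw [h1]
    have habs : |(1 - lam) / dt * (A N / W N - Istar) - V N / (dt * W N)|
        ≤ |(1 - lam) / dt * (A N / W N - Istar)| + |V N / (dt * W N)| :=
      abs_sub _ _
    refine habs.trans ?_
    have e1 : |(1 - lam) / dt * (A N / W N - Istar)|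
        = (1 - lam) / dt * |A N / W N - Istar| := by
      rw [abs_mul, abs_of_nonneg (by positivity : (0:ℝ) ≤ (1 - lam) / dt)]
    have e2 : |V N / (dt * W N)| ≤ Vth / (dt * W N) := by
      rw [abs_of_nonneg (div_nonneg (hbound N).1 (by positivity))]
      gcongr
      exact (hbound N).2
    rw [hgdef, e1]
    exact add_le_add le_rfl e2
  have hgt : Tendsto g atTop (nhds ((1 - lam) * Vth / dt)) := by
    have h1 : Tendsto (fun N => A N / W N - Istar) atTop (nhds 0) := by
      simpa using hI.sub (tendsto_const_nhds (x := Istar))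
    have h2 : Tendsto (fun N => |A N / W N - Istar|) atTop (nhds 0) := by
      simpa using h1.abs
    have h3 : Tendsto (fun N => dt * W N) atTop (nhds (dt * (1 / (1 - lam)))) :=
      tendsto_const_nhds.mul hWtend
    have hne : dt * (1 / (1 - lam)) ≠ 0 := by positivity
    have h4 : Tendsto (fun N => Vth / (dt * W N)) atTop
        (nhds (Vth / (dt * (1 / (1 - lam))))) := tendsto_const_nhds.div h3 hne
    have h5 := (tendsto_const_nhds (x := (1 - lam) / dt)).mul h2 |>.add h4
    convert h5 using 1
    field_simp
    ring
  calc limsup (fun N : ℕ =>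
        |Vth * B N / (dt * W N) - (1 - lam) / dt * Istar|) atTop
      ≤ limsup g atTop := by
        apply limsup_le_limsup
        · exact eventually_atTop.2 ⟨1, hmain⟩
        · exact isCoboundedUnder_le_of_le atTop (fun n => abs_nonneg _)
        · exact hgt.isBoundedUnder_le
    _ = (1 - lam) * Vth / dt := hgt.limsup_eq
end

section
/- (Quantitative single-layer form of Proposition 1) Suppose the input representation converges, â^in[N] → z ∈ ℝ^m as N → ∞, and the output membrane potentials stay bounded: 0 ≤ V[N]_j ≤ V_th for all N ≥ 0 and all j. Then for every output coordinate j, limsup_{N→∞} |â[N]_j − ((1−λ)/Δt)·(W·z)_j| ≤ (1−λ)·V_th/Δt. -/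
open Filter

private lemma lif_sum_shift (lam : ℝ) (F : ℕ → ℝ) (N : ℕ) :
    ∑ n ∈ Finset.Icc 1 (N + 1), lam ^ (N + 1 - n) * F n
      = lam * (∑ n ∈ Finset.Icc 1 N, lam ^ (N - n) * F n) + F (N + 1) := by
  rw [Finset.sum_Icc_succ_top (by omega : 1 ≤ N + 1), Finset.mul_sum]
  congr 1
  · apply Finset.sum_congr rfl
    intro n hn
    have hn' : n ≤ N := (Finset.mem_Icc.mp hn).2
    have h : N + 1 - n = (N - n) + 1 := by omega
    rw [h, pow_succ]; ring
  · simp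

private lemma lif_sum_geom (lam : ℝ) (N : ℕ) :
    (∑ n ∈ Finset.Icc 1 N, lam ^ (N - n)) = ∑ i ∈ Finset.range N, lam ^ i := by
  induction N with
  | zero => simp
  | succ N ih =>
    have h := lif_sum_shift lam (fun _ => 1) N
    simp only [mul_one] at h
    rw [h, ih, geom_sum_succ]

/-- **quantitative single-layer form of Proposition 1.** One layer of
`d` LIF neurons with weight matrix `W : ℝ^{d×m}`, output threshold `Vth > 0`, input
threshold scale `Vthin > 0`, leak factor `lam ∈ (0,1)`, discretization step `dt > 0`,
driven by input spike trains `sin : ℕ → {0,1}^m`. If the input representation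
converges, `âin N → z`, and the output membrane potentials stay bounded,
`0 ≤ V N j ≤ Vth` for all `N` and `j`, then for every output coordinate `j`,
`limsup_{N→∞} |â N j − ((1 − lam)/dt) · (W·z)_j| ≤ (1 − lam) · Vth / dt`. -/
theorem lif_layer_rate_limsup_bound (d m : ℕ) (W : Matrix (Fin d) (Fin m) ℝ)
    (Vth Vthin lam dt : ℝ) (hVth : 0 < Vth) (hVthin : 0 < Vthin)
    (hlam0 : 0 < lam) (hlam1 : lam < 1) (hdt : 0 < dt)
    (sin : ℕ → Fin m → ℝ)
    (hsin : ∀ n : ℕ, 1 ≤ n → ∀ k, sin n k = 0 ∨ sin n k = 1)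
    (V s : ℕ → Fin d → ℝ)
    (hV0 : ∀ j, V 0 j = 0)
    (hs : ∀ n : ℕ, ∀ j, s (n + 1) j
            = if Vth ≤ lam * V n j + (1 - lam) * ((Vthin / dt) * W.mulVec (sin (n + 1)) j)
              then 1 else 0)
    (hV : ∀ n : ℕ, ∀ j, V (n + 1) j
            = (lam * V n j + (1 - lam) * ((Vthin / dt) * W.mulVec (sin (n + 1)) j))
                - Vth * s (n + 1) j)
    (z : Fin m → ℝ)
    (hin : ∀ k, Tendsto (fun N : ℕ =>
            Vthin * (∑ n ∈ Finset.Icc 1 N, lam ^ (N - n) * sin n k)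
              / (dt * ∑ n ∈ Finset.Icc 1 N, lam ^ (N - n))) atTop (nhds (z k)))
    (hbound : ∀ N : ℕ, ∀ j, 0 ≤ V N j ∧ V N j ≤ Vth) :
    ∀ j, Filter.limsup (fun N : ℕ =>
        |Vth * (∑ n ∈ Finset.Icc 1 N, lam ^ (N - n) * s n j)
            / (dt * ∑ n ∈ Finset.Icc 1 N, lam ^ (N - n))
          - ((1 - lam) / dt) * W.mulVec z j|) atTop
      ≤ (1 - lam) * Vth / dt := by
  intro j
  set L : ℝ := ((1 - lam) / dt) * W.mulVec z j with hL_def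
  -- key identity from the recursion
  have key : ∀ N : ℕ, V N j
      = (1 - lam) * (Vthin / dt) * (∑ n ∈ Finset.Icc 1 N, lam ^ (N - n) * W.mulVec (sin n) j)
        - Vth * (∑ n ∈ Finset.Icc 1 N, lam ^ (N - n) * s n j) := by
    intro N
    induction N with
    | zero => simp [hV0]
    | succ N ih =>
      rw [hV N j, lif_sum_shift lam (fun n => W.mulVec (sin n) j) N,
        lif_sum_shift lam (fun n => s n j) N, ih]
      ring
  -- swap sums
  have hD_swap : ∀ N : ℕ,
      (∑ n ∈ Finset.Icc 1 N, lam ^ (N - n) * W.mulVec (sin n) j)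
        = ∑ k, W j k * (∑ n ∈ Finset.Icc 1 N, lam ^ (N - n) * sin n k) := by
    intro N
    simp only [Matrix.mulVec, dotProduct, Finset.mul_sum]
    rw [Finset.sum_comm]
    exact Finset.sum_congr rfl fun k _ => Finset.sum_congr rfl fun n _ => by ring
  -- S properties
  have hS_pos : ∀ N : ℕ, 1 ≤ N → 0 < (∑ n ∈ Finset.Icc 1 N, lam ^ (N - n)) := by
    intro N hN
    rw [lif_sum_geom]
    exact Finset.sum_pos (fun i _ => pow_pos hlam0 i)
      (Finset.nonempty_range_iff.mpr (by omega))
  have hS_lim : Tendsto (fun N : ℕ => ∑ n ∈ Finset.Icc 1 N, lam ^ (N - n)) atTop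
      (nhds (1 - lam)⁻¹) := by
    have := (hasSum_geometric_of_lt_one hlam0.le hlam1).tendsto_sum_nat
    exact this.congr fun N => (lif_sum_geom lam N).symm
  -- limit of g
  have hWz : W.mulVec z j = ∑ k, W j k * z k := by
    simp [Matrix.mulVec, dotProduct]
  have hg : Tendsto (fun N : ℕ => ((1 - lam) / dt) * ∑ k, W j k *
      (Vthin * (∑ n ∈ Finset.Icc 1 N, lam ^ (N - n) * sin n k)
        / (dt * ∑ n ∈ Finset.Icc 1 N, lam ^ (N - n)))) atTop (nhds L) := by
    rw [hL_def, hWz]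
    exact (tendsto_finset_sum _ fun k _ => (hin k).const_mul (W j k)).const_mul _
  -- limit of the error bound term
  have hVb : Tendsto (fun N : ℕ => Vth / (dt * ∑ n ∈ Finset.Icc 1 N, lam ^ (N - n))) atTop
      (nhds ((1 - lam) * Vth / dt)) := by
    have hne : dt * (1 - lam)⁻¹ ≠ 0 := by
      apply mul_ne_zero hdt.ne'
      exact inv_ne_zero (by linarith)
    have := Tendsto.div (tendsto_const_nhds (x := Vth))
      ((tendsto_const_nhds (x := dt)).mul hS_lim) hne
    convert this using 2
    · simp only [Pi.div_apply]
    · rw [div_mul_eq_div_div, div_inv_eq_mul]; ring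
  -- the dominating sequence
  set ψ : ℕ → ℝ := fun N =>
    |((1 - lam) / dt) * ∑ k, W j k *
        (Vthin * (∑ n ∈ Finset.Icc 1 N, lam ^ (N - n) * sin n k)
          / (dt * ∑ n ∈ Finset.Icc 1 N, lam ^ (N - n))) - L|
      + Vth / (dt * ∑ n ∈ Finset.Icc 1 N, lam ^ (N - n)) with hψ_def
  have hψ_lim : Tendsto ψ atTop (nhds ((1 - lam) * Vth / dt)) := by
    have h1 : Tendsto (fun N : ℕ =>
        |((1 - lam) / dt) * ∑ k, W j k *
          (Vthin * (∑ n ∈ Finset.Icc 1 N, lam ^ (N - n) * sin n k)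
            / (dt * ∑ n ∈ Finset.Icc 1 N, lam ^ (N - n))) - L|) atTop (nhds 0) := by
      have := (hg.sub (tendsto_const_nhds (x := L))).abs
      simpa using this
    have := h1.add hVb
    simpa using this
  -- eventual pointwise bound
  have hev : ∀ᶠ N in atTop, |Vth * (∑ n ∈ Finset.Icc 1 N, lam ^ (N - n) * s n j)
      / (dt * ∑ n ∈ Finset.Icc 1 N, lam ^ (N - n)) - L| ≤ ψ N := by
    filter_upwards [eventually_ge_atTop 1] with N hN
    set SN : ℝ := ∑ n ∈ Finset.Icc 1 N, lam ^ (N - n) with hSN_def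
    have hSN : 0 < SN := hS_pos N hN
    set AN : ℝ := ∑ n ∈ Finset.Icc 1 N, lam ^ (N - n) * s n j with hAN_def
    set DN : ℝ := ∑ n ∈ Finset.Icc 1 N, lam ^ (N - n) * W.mulVec (sin n) j with hDN_def
    set gN : ℝ := ((1 - lam) / dt) * ∑ k, W j k *
        (Vthin * (∑ n ∈ Finset.Icc 1 N, lam ^ (N - n) * sin n k) / (dt * SN)) with hgN_def
    have hgN_eq : gN = (1 - lam) * (Vthin / dt) * DN / (dt * SN) := by
      rw [hgN_def, hDN_def, hD_swap N]
      have hrw : ∀ k : Fin m, W j k *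
          (Vthin * (∑ n ∈ Finset.Icc 1 N, lam ^ (N - n) * sin n k) / (dt * SN))
          = Vthin * (W j k * (∑ n ∈ Finset.Icc 1 N, lam ^ (N - n) * sin n k)) / (dt * SN) :=
        fun k => by ring
      rw [Finset.sum_congr rfl fun k _ => hrw k, ← Finset.sum_div, ← Finset.mul_sum]
      field_simp
    have hkey : Vth * AN = (1 - lam) * (Vthin / dt) * DN - V N j := by
      have := key N
      rw [← hAN_def, ← hDN_def] at this
      linarith
    have hf_eq : Vth * AN / (dt * SN) - L = (gN - L) - V N j / (dt * SN) := by
      rw [hkey, hgN_eq]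
      ring
    rw [hf_eq, hψ_def]
    have htri : |(gN - L) - V N j / (dt * SN)| ≤ |gN - L| + |V N j / (dt * SN)| := by
      simpa [sub_eq_add_neg, abs_neg] using abs_add_le (gN - L) (-(V N j / (dt * SN)))
    have hdtS : 0 < dt * SN := mul_pos hdt hSN
    have hVle : |V N j / (dt * SN)| ≤ Vth / (dt * SN) := by
      rw [abs_of_nonneg (div_nonneg (hbound N j).1 hdtS.le)]
      apply div_le_div_of_nonneg_right ?_ hdtS.le
      exact (hbound N j).2
    calc |(gN - L) - V N j / (dt * SN)| ≤ |gN - L| + |V N j / (dt * SN)| := htri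
      _ ≤ |gN - L| + Vth / (dt * SN) := by linarith
  -- conclude with limsup
  have hcob : IsCoboundedUnder (· ≤ ·) atTop (fun N : ℕ =>
      |Vth * (∑ n ∈ Finset.Icc 1 N, lam ^ (N - n) * s n j)
        / (dt * ∑ n ∈ Finset.Icc 1 N, lam ^ (N - n)) - L|) :=
    isCoboundedUnder_le_of_le atTop (x := 0) fun N => abs_nonneg _
  have hbdd : IsBoundedUnder (· ≤ ·) atTop ψ := hψ_lim.isBoundedUnder_le
  calc Filter.limsup (fun N : ℕ =>
        |Vth * (∑ n ∈ Finset.Icc 1 N, lam ^ (N - n) * s n j)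
          / (dt * ∑ n ∈ Finset.Icc 1 N, lam ^ (N - n)) - L|) atTop
      ≤ Filter.limsup ψ atTop := Filter.limsup_le_limsup hev hcob hbdd
    _ = (1 - lam) * Vth / dt := hψ_lim.limsup_eq
end

section
/- If the input current is constant, I[n] = I* for all n ≥ 1, then for every N ≥ 1 the spike count of the IF neuron equals ∑_{n=1}^N s[n] = clamp(⌊N·I*/V_th⌋, 0, N), where clamp(x,a,b) := max(a, min(x,b)) and ⌊·⌋ is the floor function; equivalently, the scaled firing rate is a[N] = (V_th/N)·clamp(⌊N·I*/V_th⌋, 0, N). -/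
lemma clamp_step_aux (x : ℝ) (n : ℕ) :
    (if max 0 (min ⌊(n:ℝ)*x⌋ (n:ℤ)) + 1 ≤ ⌊((n:ℝ)+1)*x⌋
     then max 0 (min ⌊(n:ℝ)*x⌋ (n:ℤ)) + 1
     else max 0 (min ⌊(n:ℝ)*x⌋ (n:ℤ)))
    = max 0 (min ⌊((n:ℝ)+1)*x⌋ ((n:ℤ)+1)) := by
  set a := ⌊(n:ℝ)*x⌋ with ha
  set b := ⌊((n:ℝ)+1)*x⌋ with hb
  set m := ⌊x⌋ with hm
  have fa := Int.floor_le ((n:ℝ)*x)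
  have fa' := Int.lt_floor_add_one ((n:ℝ)*x)
  have fb := Int.floor_le (((n:ℝ)+1)*x)
  have fb' := Int.lt_floor_add_one (((n:ℝ)+1)*x)
  have fm := Int.floor_le x
  have fm' := Int.lt_floor_add_one x
  rw [← ha, ← hb, ← hm] at *
  have h1 : a + m ≤ b := by
    rw [hb]
    apply Int.le_floor.2
    push_cast
    nlinarith
  have h2 : b ≤ a + m + 1 := by
    have : (b:ℝ) < (a:ℝ) + m + 2 := by nlinarith
    have h2' : b < a + m + 2 := by exact_mod_cast this
    omega
  have h3 : 1 ≤ m → (n:ℤ) ≤ a := by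
    intro h
    rw [ha]
    apply Int.le_floor.2
    have hx : (1:ℝ) ≤ x := le_trans (by exact_mod_cast h) fm
    push_cast
    nlinarith [Nat.cast_nonneg (α := ℝ) n]
  have h4 : m ≤ -1 → (n = 0 ∨ a ≤ -1) := by
    intro h
    rcases Nat.eq_zero_or_pos n with h0 | h0
    · exact Or.inl h0
    · right
      have hx : x < 0 := by
        have : (m:ℝ) + 1 ≤ 0 := by exact_mod_cast (by omega : m + 1 ≤ 0)
        linarith
      have : (n:ℝ) * x < 0 := mul_neg_of_pos_of_neg (by exact_mod_cast h0) hx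
      rw [ha]
      have := Int.floor_lt.2 (by simpa using this : (n:ℝ)*x < ((0:ℤ):ℝ))
      omega
  have h5 : n = 0 → a = 0 := by
    intro h; subst h
    have u : (a:ℝ) ≤ 0 := by simpa using fa
    have v : (0:ℝ) < (a:ℝ) + 1 := by simpa using fa'
    have u' : a ≤ 0 := by exact_mod_cast u
    have v' : (0:ℤ) < a + 1 := by exact_mod_cast v
    omega
  omega

/-- For the discrete-time IF neuron with threshold `Vth > 0` and
constant input current `Istar`, for every `N ≥ 1` the spike count equals
`∑_{n=1}^N s n = clamp(⌊N·Istar/Vth⌋, 0, N)` where `clamp x a b = max a (min x b)`;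
equivalently, the scaled firing rate is
`a N = (Vth/N) · clamp(⌊N·Istar/Vth⌋, 0, N)`. -/
theorem if_constant_input_spike_count (Vth Istar : ℝ) (hVth : 0 < Vth)
    (V s : ℕ → ℝ)
    (hV0 : V 0 = 0)
    (hs : ∀ n : ℕ, s (n + 1) = if Vth ≤ V n + Istar then 1 else 0)
    (hV : ∀ n : ℕ, V (n + 1) = (V n + Istar) - Vth * s (n + 1)) :
    ∀ N : ℕ, 1 ≤ N →
      (∑ n ∈ Finset.Icc 1 N, s n)
          = ((max 0 (min ⌊(N : ℝ) * Istar / Vth⌋ (N : ℤ)) : ℤ) : ℝ) ∧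
      (Vth / N) * ∑ n ∈ Finset.Icc 1 N, s n
          = (Vth / N) * ((max 0 (min ⌊(N : ℝ) * Istar / Vth⌋ (N : ℤ)) : ℤ) : ℝ) := by
  set x := Istar / Vth with hx
  set c : ℕ → ℤ := fun n => max 0 (min ⌊(n:ℝ)*Istar/Vth⌋ (n:ℤ)) with hc
  have hcx : ∀ n : ℕ, c n = max 0 (min ⌊(n:ℝ)*x⌋ (n:ℤ)) := by
    intro n; simp [hc, hx, mul_div_assoc]
  have key : ∀ n : ℕ, (∑ k ∈ Finset.Icc 1 n, s k) = ((c n : ℤ) : ℝ) ∧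
      V n = n * Istar - Vth * (c n : ℝ) := by
    intro n
    induction n with
    | zero => exact ⟨by simp [hc], by rw [hV0]; simp [hc]⟩
    | succ n ih =>
      obtain ⟨hsum, hVn⟩ := ih
      have hcond : (Vth ≤ V n + Istar) ↔ (c n + 1 ≤ ⌊((n:ℝ)+1)*x⌋) := by
        rw [Int.le_floor, hVn]
        push_cast
        rw [hx, ← mul_div_assoc, le_div_iff₀ hVth]
        constructor <;> intro h <;> nlinarith
      have hstep : s (n+1) = if c n + 1 ≤ ⌊((n:ℝ)+1)*x⌋ then (1:ℝ) else 0 := by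
        rw [hs n]; simp [hcond]
      have hcnew : ((if c n + 1 ≤ ⌊((n:ℝ)+1)*x⌋ then c n + 1 else c n) : ℤ) = c (n+1) := by
        rw [hcx n, hcx (n+1)]
        push_cast
        exact clamp_step_aux x n
      have hsum' : (∑ k ∈ Finset.Icc 1 (n+1), s k) = ((c (n+1) : ℤ) : ℝ) := by
        rw [Finset.sum_Icc_succ_top (by omega : 1 ≤ n + 1), hsum, hstep, ← hcnew]
        split <;> push_cast <;> ring
      refine ⟨hsum', ?_⟩
      rw [hV n, hVn, hstep, ← hcnew]
      split <;> push_cast <;> ring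
  intro N hN
  obtain ⟨hsum, -⟩ := key N
  exact ⟨hsum, by rw [hsum]⟩
end

section
/- With the modified firing rule at α = 1/2, if the input current is constant, I[n] = I* for all n ≥ 1, then for every N ≥ 1 the spike count equals ∑_{n=1}^N s[n] = clamp(⌊N·I*/V_th + 1/2⌋, 0, N), where clamp(x,a,b) := max(a, min(x,b)) and ⌊·⌋ is the floor function; equivalently, a[N] = (V_th/N)·clamp(⌊N·I*/V_th + 1/2⌋, 0, N). -/
/-- For the discrete-time IF neuron with threshold `Vth > 0`,
constant input current `Istar`, and the modified firing rule at `α = 1/2` (fire when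
`U n ≥ α·Vth`, reset by subtracting `Vth`), for every `N ≥ 1` the spike count equals
`∑_{n=1}^N s n = clamp(⌊N·Istar/Vth + 1/2⌋, 0, N)` where
`clamp x a b = max a (min x b)`; equivalently,
`a N = (Vth/N) · clamp(⌊N·Istar/Vth + 1/2⌋, 0, N)`. -/
theorem if_modified_constant_input_spike_count (Vth Istar : ℝ) (hVth : 0 < Vth)
    (V s : ℕ → ℝ)
    (hV0 : V 0 = 0)
    (hs : ∀ n : ℕ, s (n + 1) = if (1 / 2 : ℝ) * Vth ≤ V n + Istar then 1 else 0)
    (hV : ∀ n : ℕ, V (n + 1) = (V n + Istar) - Vth * s (n + 1)) :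
    ∀ N : ℕ, 1 ≤ N →
      (∑ n ∈ Finset.Icc 1 N, s n)
          = ((max 0 (min ⌊(N : ℝ) * Istar / Vth + 1 / 2⌋ (N : ℤ)) : ℤ) : ℝ) ∧
      (Vth / N) * ∑ n ∈ Finset.Icc 1 N, s n
          = (Vth / N) * ((max 0 (min ⌊(N : ℝ) * Istar / Vth + 1 / 2⌋ (N : ℤ)) : ℤ) : ℝ) := by
  set c : ℝ := Istar / Vth with hc
  have key : ∀ n : ℕ,
      (∑ k ∈ Finset.Icc 1 n, s k)
        = ((max 0 (min ⌊(n : ℝ) * Istar / Vth + 1 / 2⌋ (n : ℤ)) : ℤ) : ℝ) ∧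
      V n = n * Istar - Vth * ∑ k ∈ Finset.Icc 1 n, s k := by
    intro n
    induction n with
    | zero =>
      have h0 : ⌊((0:ℕ) : ℝ) * Istar / Vth + 1 / 2⌋ = 0 := by
        norm_num
      constructor
      · simp [h0]
      · simp [hV0]
    | succ n ih =>
      obtain ⟨ihS, ihV'⟩ := ih
      set k : ℤ := ⌊(n : ℝ) * Istar / Vth + 1 / 2⌋ with hkdef
      set k' : ℤ := ⌊((n + 1 : ℕ) : ℝ) * Istar / Vth + 1 / 2⌋ with hk'def
      set fn : ℤ := max 0 (min k (n : ℤ)) with hfn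
      clear_value k k' fn
      have hsplit : (∑ x ∈ Finset.Icc 1 (n+1), s x)
          = (∑ x ∈ Finset.Icc 1 n, s x) + s (n+1) := by
        rw [Finset.sum_Icc_succ_top (by omega)]
      have hn0 : (0:ℝ) ≤ (n:ℝ) := Nat.cast_nonneg n
      have hexp : ((n:ℝ) + 1) * c = (n:ℝ) * c + c := by ring
      have hk1 : (k : ℝ) ≤ (n : ℝ) * c + 1/2 := by
        have h := Int.floor_le ((n : ℝ) * Istar / Vth + 1 / 2)
        rw [← hkdef] at h
        calc (k:ℝ) ≤ (n : ℝ) * Istar / Vth + 1 / 2 := h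
          _ = (n:ℝ) * c + 1/2 := by rw [hc]; ring
      have hk2 : (n : ℝ) * c + 1/2 < (k : ℝ) + 1 := by
        have h := Int.lt_floor_add_one ((n : ℝ) * Istar / Vth + 1 / 2)
        rw [← hkdef] at h
        calc (n:ℝ) * c + 1/2 = (n : ℝ) * Istar / Vth + 1 / 2 := by rw [hc]; ring
          _ < (k:ℝ) + 1 := h
      have hx' : ((n + 1 : ℕ) : ℝ) * Istar / Vth + 1 / 2 = ((n:ℝ) + 1) * c + 1/2 := by
        push_cast; rw [hc]; ring
      have hk'1 : (k' : ℝ) ≤ ((n:ℝ) + 1) * c + 1/2 := by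
        have h := Int.floor_le (((n + 1 : ℕ) : ℝ) * Istar / Vth + 1 / 2)
        rw [← hk'def, hx'] at h; exact h
      have hk'2 : ((n:ℝ) + 1) * c + 1/2 < (k' : ℝ) + 1 := by
        have h := Int.lt_floor_add_one (((n + 1 : ℕ) : ℝ) * Istar / Vth + 1 / 2)
        rw [← hk'def, hx'] at h; exact h
      -- the firing condition in integer form
      have hcond : ((1 / 2 : ℝ) * Vth ≤ V n + Istar) ↔ fn + 1 ≤ k' := by
        have hdiv : ((fn:ℝ) + 1/2 ≤ ((n:ℝ) + 1) * c ↔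
            (1 / 2 : ℝ) * Vth ≤ (n:ℝ) * Istar - Vth * (fn:ℝ) + Istar) := by
          rw [hc, ← mul_div_assoc, le_div_iff₀ hVth]
          constructor <;> intro h <;> nlinarith
        rw [ihV', ihS]
        rw [hk'def, Int.le_floor, hx']
        push_cast
        constructor <;> intro h
        · have := hdiv.mpr h; linarith
        · exact hdiv.mp (by linarith)
      by_cases hfire : fn + 1 ≤ k'
      · have hs1 : s (n+1) = 1 := by rw [hs n, if_pos (hcond.mpr hfire)]
        have hint : max 0 (min k' ((n:ℤ) + 1)) = fn + 1 := by
          rcases le_or_gt (n:ℤ) k with hkn | hkn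
          · omega
          · rcases le_or_gt 0 k with hk0 | hk0
            · have hn1 : (1:ℤ) ≤ (n:ℤ) := by omega
              have hn1' : (1:ℝ) ≤ (n:ℝ) := by exact_mod_cast hn1
              have hkn' : (k:ℝ) ≤ (n:ℝ) - 1 := by
                have : k ≤ (n:ℤ) - 1 := by omega
                exact_mod_cast this
              have hclt : c < 1 := by
                by_contra hcc
                push_neg at hcc
                have h1 : (n:ℝ) * 1 ≤ (n:ℝ) * c :=
                  mul_le_mul_of_nonneg_left hcc (by linarith)
                linarith
              have hkub : k' ≤ k + 1 := by
                have h2 : (k':ℝ) < (k:ℝ) + 2 := by nlinarith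
                have h3 : k' < k + 2 := by exact_mod_cast h2
                omega
              omega
            · exfalso
              have h1k' : (1:ℝ) ≤ (k':ℝ) := by
                have : (1:ℤ) ≤ k' := by omega
                exact_mod_cast this
              have hkneg : (k:ℝ) + 1 ≤ 0 := by
                have : k + 1 ≤ (0:ℤ) := by omega
                exact_mod_cast this
              have hcge : (1:ℝ) ≤ c := by nlinarith
              have : (0:ℝ) ≤ (n:ℝ) * c := mul_nonneg hn0 (by linarith)
              linarith
        constructor
        · rw [hsplit, ihS, hs1]
          push_cast [hint]
          ring
        · rw [hV n, ihV', hsplit]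
          push_cast
          ring
      · have hs0 : s (n+1) = 0 := by rw [hs n, if_neg (fun h => hfire (hcond.mp h))]
        have hk'fn : k' ≤ fn := by omega
        have hint : max 0 (min k' ((n:ℤ) + 1)) = fn := by
          rcases le_or_gt k 0 with hk0 | hk0
          · omega
          · rcases le_or_gt (min k (n:ℤ)) 0 with hm | hm
            · omega
            · have hmk : min k (n:ℤ) ≤ k := min_le_left _ _
              have hm1z : (1:ℤ) ≤ min k (n:ℤ) := by omega
              have hm1 := (Int.cast_le (R := ℝ)).mpr hm1z
              rw [Int.cast_one] at hm1
              have hmk' := (Int.cast_le (R := ℝ)).mpr hmk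
              have hcpos : (0:ℝ) ≤ c := by
                by_contra hcc
                push_neg at hcc
                have : (n:ℝ) * c ≤ 0 := mul_nonpos_of_nonneg_of_nonpos hn0 (le_of_lt hcc)
                linarith
              have hmk'' : min k (n:ℤ) ≤ k' := by
                rw [hk'def, Int.le_floor, hx']
                linarith
              omega
        constructor
        · rw [hsplit, ihS, hs0]
          push_cast [hint]
          ring
        · rw [hV n, ihV', hsplit]
          push_cast
          ring
  intro N hN
  obtain ⟨h1, _⟩ := key N
  exact ⟨h1, by rw [h1]⟩
end

section
/- If the input current is constant with 0 ≤ I* ≤ V_th, then for every N ≥ 1 the quantization error of the IF neuron's scaled firing rate satisfies |a[N] − I*| < V_th/N. -/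
/-- For the discrete-time IF neuron with threshold `Vth > 0` and
constant input current `Istar` with `0 ≤ Istar ≤ Vth`, for every `N ≥ 1` the
quantization error of the scaled firing rate satisfies `|a N − Istar| < Vth / N`. -/
theorem if_constant_input_quantization_error (Vth Istar : ℝ) (hVth : 0 < Vth)
    (hI0 : 0 ≤ Istar) (hI1 : Istar ≤ Vth)
    (V s : ℕ → ℝ)
    (hV0 : V 0 = 0)
    (hs : ∀ n : ℕ, s (n + 1) = if Vth ≤ V n + Istar then 1 else 0)
    (hV : ∀ n : ℕ, V (n + 1) = (V n + Istar) - Vth * s (n + 1)) :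
    ∀ N : ℕ, 1 ≤ N →
      |(Vth / N) * (∑ n ∈ Finset.Icc 1 N, s n) - Istar| < Vth / N := by
  have hbound : ∀ n : ℕ, 0 ≤ V n ∧ V n < Vth := by
    intro n
    induction n with
    | zero => simp [hV0, hVth]
    | succ k ih =>
      rw [hV k, hs k]
      by_cases h : Vth ≤ V k + Istar
      · simp only [h, if_true]
        constructor <;> nlinarith [ih.1, ih.2]
      · simp only [h, if_false]
        push_neg at h
        constructor <;> nlinarith [ih.1, ih.2]
  have htel : ∀ N : ℕ, V N = N * Istar - Vth * (∑ n ∈ Finset.Icc 1 N, s n) := by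
    intro N
    induction N with
    | zero => simp [hV0]
    | succ k ih =>
      rw [Finset.sum_Icc_succ_top (by omega : 1 ≤ k + 1), hV k, ih]
      push_cast
      ring
  intro N hN
  have hNpos : (0:ℝ) < N := by exact_mod_cast Nat.lt_of_lt_of_le Nat.zero_lt_one hN
  have h1 := (hbound N).1
  have h2 := (hbound N).2
  have hVN := htel N
  have hkey : (Vth / N) * (∑ n ∈ Finset.Icc 1 N, s n) - Istar = -(V N) / N := by
    field_simp
    nlinarith [hVN]
  rw [hkey, abs_div, abs_neg, abs_of_nonneg h1, abs_of_pos hNpos]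
  exact (div_lt_div_iff_of_pos_right hNpos).mpr h2
end

section
/- With the modified firing rule at α = 1/2, if the input current is constant with 0 ≤ I* ≤ V_th, then for every N ≥ 1 the quantization error satisfies |a[N] − I*| ≤ V_th/(2N); thus the maximum absolute quantization error is half of the bound V_th/N for the standard firing rule. -/
/-- For the discrete-time IF neuron with threshold `Vth > 0`,
constant input current `Istar` with `0 ≤ Istar ≤ Vth`, and the modified firing rule at
`α = 1/2` (fire when `U n ≥ α·Vth`, reset by subtracting `Vth`), for every `N ≥ 1`
the quantization error satisfies `|a N − Istar| ≤ Vth / (2N)` — half of the bound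
`Vth / N` of the standard firing rule. -/
theorem if_modified_constant_input_quantization_error (Vth Istar : ℝ) (hVth : 0 < Vth)
    (hI0 : 0 ≤ Istar) (hI1 : Istar ≤ Vth)
    (V s : ℕ → ℝ)
    (hV0 : V 0 = 0)
    (hs : ∀ n : ℕ, s (n + 1) = if (1 / 2 : ℝ) * Vth ≤ V n + Istar then 1 else 0)
    (hV : ∀ n : ℕ, V (n + 1) = (V n + Istar) - Vth * s (n + 1)) :
    ∀ N : ℕ, 1 ≤ N →
      |(Vth / N) * (∑ n ∈ Finset.Icc 1 N, s n) - Istar| ≤ Vth / (2 * N) := by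
  have hinv : ∀ n : ℕ, |V n| ≤ Vth / 2 := by
    intro n
    induction n with
    | zero => rw [hV0]; simp; positivity
    | succ k ih =>
      rw [abs_le] at ih ⊢
      rw [hV k, hs k]
      by_cases h : (1 / 2 : ℝ) * Vth ≤ V k + Istar
      · rw [if_pos h]
        constructor <;> nlinarith [ih.1, ih.2]
      · rw [if_neg h]
        push_neg at h
        constructor <;> nlinarith [ih.1, ih.2]
  have htel : ∀ N : ℕ, Vth * (∑ n ∈ Finset.Icc 1 N, s n) = N * Istar - V N := by
    intro N
    induction N with
    | zero => simp [hV0]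
    | succ k ih =>
      rw [Finset.sum_Icc_succ_top (by omega : 1 ≤ k + 1)]
      push_cast
      rw [mul_add, ih, hV k]
      ring
  intro N hN
  have hNpos : (0 : ℝ) < N := by exact_mod_cast Nat.lt_of_lt_of_le Nat.zero_lt_one hN
  have key : (Vth / N) * (∑ n ∈ Finset.Icc 1 N, s n) - Istar = -V N / N := by
    field_simp
    linarith [htel N]
  rw [key, abs_div, abs_neg, abs_of_pos hNpos, div_le_div_iff₀ hNpos (by positivity)]
  have := hinv N
  nlinarith [hinv N]
end
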